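/- Let G be a connected graph with conductance Φ(G) ≥ 1/2 in which every vertex has degree at most 6, let T be a set of k vertices, and let V' ⊆ V with |V'| ≥ 0.1·|V| and k ≤ 0.1·|V|. Then there exist at least k/3 edge-disjoint paths in G, each connecting a distinct vertex of T to a distinct vertex of V'. -/

import Mathlib

open Finset

/-- The number of edges of `G` crossing from `S` to its complement. -/
def crossEdges {V : Type*} [Fintype V] [DecidableEq V] (G : SimpleGraph V) [DecidableRel G.Adj]
    (S : Finset V) : ℕ :=
  (Finset.univ.filter (fun p : V × V => p.1 ∈ S ∧ p.2 ∉ S ∧ G.Adj p.1 p.2)).card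

/-- The volume of a vertex set: the sum of the degrees of its vertices. -/
def volume {V : Type*} [Fintype V] (G : SimpleGraph V) [DecidableRel G.Adj]
    (S : Finset V) : ℕ :=
  ∑ v ∈ S, G.degree v

set_option linter.unusedSectionVars false
set_option maxHeartbeats 1000000

namespace StmtAux

variable {V : Type*} [Fintype V] [DecidableEq V] {G : SimpleGraph V}


def dvg (f : V → V → ℤ) (u : V) : ℤ := ∑ v, f u v

def Pre (G : SimpleGraph V) (f : V → V → ℤ) : Prop :=
  (∀ u v, f v u = - f u v) ∧ (∀ u v, f u v ≤ 1) ∧ (∀ u v, ¬ G.Adj u v → f u v = 0)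

def push (f : V → V → ℤ) (v x : V) : V → V → ℤ :=
  fun a b => f a b + (if a = v ∧ b = x then 1 else 0) - (if a = x ∧ b = v then 1 else 0)

lemma push_pre (f : V → V → ℤ) (hf : Pre G f) (v x : V) (hadj : G.Adj v x)
    (hres : f v x ≤ 0) : Pre G (push f v x) := by
  obtain ⟨hskew, hcap, hsupp⟩ := hf
  have hvx : v ≠ x := hadj.ne
  refine ⟨?_, ?_, ?_⟩
  · intro a b
    unfold push
    have e1 : (b = v ∧ a = x) ↔ (a = x ∧ b = v) := and_comm
    have e2 : (b = x ∧ a = v) ↔ (a = v ∧ b = x) := and_comm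
    rw [hskew a b, if_congr e1 rfl rfl, if_congr e2 rfl rfl]
    ring
  · intro a b
    unfold push
    by_cases h1 : a = v ∧ b = x <;> by_cases h2 : a = x ∧ b = v
    · exact absurd (h1.1.symm.trans h2.1) hvx
    · obtain ⟨rfl, rfl⟩ := h1
      simp [h2]
      omega
    · obtain ⟨rfl, rfl⟩ := h2
      have := hcap a b
      simp [h1]
      omega
    · have := hcap a b
      simp [h1, h2]
      omega
  · intro a b hnadj
    unfold push
    have h1 : ¬(a = v ∧ b = x) := by rintro ⟨rfl, rfl⟩; exact hnadj hadj
    have h2 : ¬(a = x ∧ b = v) := by rintro ⟨rfl, rfl⟩; exact hnadj hadj.symm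
    simp [h1, h2, hsupp a b hnadj]

lemma push_dvg (f : V → V → ℤ) (v x : V) (hvx : v ≠ x) (u : V) :
    dvg (push f v x) u = dvg f u + (if u = v then 1 else 0) - (if u = x then 1 else 0) := by
  unfold dvg push
  rw [Finset.sum_sub_distrib, Finset.sum_add_distrib]
  congr 1
  · congr 1
    by_cases hu : u = v
    · subst hu
      simp [hvx]
    · simp [hu]
  · by_cases hu : u = x
    · subst hu
      simp [hvx.symm]
    · simp [hu]

lemma push_eq_of_ne (f : V → V → ℤ) (v x a b : V) (h1 : ¬(a = v ∧ b = x))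
    (h2 : ¬(a = x ∧ b = v)) : push f v x a b = f a b := by
  simp [push, h1, h2]

set_option linter.unusedSectionVars false

lemma chain_imp_mem {r r' : V → V → Prop} :
    ∀ (l : List V) (x : V), List.Chain r x l →
      (∀ a b, a ∈ x :: l → b ∈ l → r a b → r' a b) → List.Chain r' x l := by
  intro l
  induction l with
  | nil => intro x _ _; exact List.Chain.nil
  | cons c l' ih =>
    intro x h hmem
    rcases List.chain_cons.1 h with ⟨hxc, hc⟩
    refine List.chain_cons.2 ⟨hmem x c (by simp) (by simp) hxc, ih c hc ?_⟩
    intro a b ha hb hr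
    exact hmem a b (by simp at ha ⊢; tauto) (by simp [hb]) hr

lemma augment_core :
    ∀ (l : List V) (s w : V) (f : V → V → ℤ), Pre G f →
      List.Chain (fun u v => G.Adj u v ∧ f u v ≤ 0) s l →
      (s :: l).getLast (by simp) = w → (s :: l).Nodup →
      ∃ f', Pre G f' ∧
        ∀ u, dvg f' u = dvg f u + (if u = s then 1 else 0) - (if u = w then 1 else 0) := by
  intro l
  induction l with
  | nil =>
    intro s w f hf _ hlast _
    simp at hlast
    subst hlast
    exact ⟨f, hf, fun u => by ring⟩
  | cons c l' ih =>
    intro s w f hf hchain hlast hnodup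
    rcases List.chain_cons.1 hchain with ⟨⟨hadj, hres⟩, hrest⟩
    have hs_notmem : s ∉ c :: l' := (List.nodup_cons.1 hnodup).1
    have hsc : s ≠ c := fun h => hs_notmem (h ▸ List.mem_cons_self)
    set f₁ := push f s c with hf₁
    have hf₁pre : Pre G f₁ := push_pre f hf s c hadj hres
    have hrest₁ : List.Chain (fun u v => G.Adj u v ∧ f₁ u v ≤ 0) c l' := by
      refine chain_imp_mem l' c hrest ?_
      intro a b ha hb ⟨hab, hab2⟩
      refine ⟨hab, ?_⟩
      rw [hf₁, push_eq_of_ne]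
      · exact hab2
      · rintro ⟨rfl, rfl⟩; exact hs_notmem ha
      · rintro ⟨rfl, rfl⟩; exact hs_notmem (List.mem_cons.2 (Or.inr hb))
    have hlast' : (c :: l').getLast (by simp) = w := by
      rw [← hlast]; exact (List.getLast_cons (by simp)).symm
    obtain ⟨f', hf'pre, hf'dvg⟩ := ih c w f₁ hf₁pre hrest₁ hlast' (List.nodup_cons.1 hnodup).2
    refine ⟨f', hf'pre, fun u => ?_⟩
    rw [hf'dvg u, push_dvg f s c hsc u]
    have hws : w ≠ s := by
      intro h
      subst h
      exact hs_notmem (hlast' ▸ List.getLast_mem (l := c :: l') (by simp))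
    by_cases h1 : u = s <;> by_cases h2 : u = c <;> by_cases h3 : u = w <;>
      simp_all <;> ring

lemma unpush_core :
    ∀ (l : List V) (s w : V) (f : V → V → ℤ), Pre G f →
      List.Chain (fun u v => f u v = 1) s l →
      (s :: l).getLast (by simp) = w → (s :: l).Nodup →
      ∃ f₂, Pre G f₂ ∧
        (∀ u, dvg f₂ u = dvg f u - (if u = s then 1 else 0) + (if u = w then 1 else 0)) ∧
        (∀ x y, (x, y) ∈ (s :: l).zip l → f₂ x y = 0 ∧ f₂ y x = 0) ∧
        (∀ u v, f₂ u v ≠ 0 → f₂ u v = f u v) := by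
  intro l
  induction l with
  | nil =>
    intro s w f hf _ hlast _
    simp at hlast
    subst hlast
    exact ⟨f, hf, fun u => by ring, by simp, fun u v _ => rfl⟩
  | cons c l' ih =>
    intro s w f hf hchain hlast hnodup
    rcases List.chain_cons.1 hchain with ⟨hsc1, hrest⟩
    have hs_notmem : s ∉ c :: l' := (List.nodup_cons.1 hnodup).1
    have hsc : s ≠ c := fun h => hs_notmem (h ▸ List.mem_cons_self)
    have hadj : G.Adj s c := by
      by_contra hn
      rw [hf.2.2 s c hn] at hsc1
      exact absurd hsc1 (by norm_num)
    have hcs : f c s = -1 := by rw [hf.1 s c, hsc1]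
    set f₁ := push f c s with hf₁def
    have hf₁pre : Pre G f₁ := push_pre f hf c s hadj.symm (by omega)
    have hzsc : f₁ s c = 0 := by
      simp [hf₁def, push, hsc, hsc.symm, hsc1]
    have hzcs : f₁ c s = 0 := by
      simp [hf₁def, push, hsc, hsc.symm, hcs]
    have heq : ∀ a b, ¬(a = c ∧ b = s) → ¬(a = s ∧ b = c) → f₁ a b = f a b := by
      intro a b h1 h2
      exact push_eq_of_ne f c s a b h1 h2
    have hrest₁ : List.Chain (fun u v => f₁ u v = 1) c l' := by
      refine chain_imp_mem l' c hrest ?_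
      intro a b ha hb hab
      rw [heq a b]
      · exact hab
      · rintro ⟨rfl, rfl⟩; exact hs_notmem (List.mem_cons.2 (Or.inr hb))
      · rintro ⟨rfl, rfl⟩; exact hs_notmem ha
    have hlast' : (c :: l').getLast (by simp) = w := by
      rw [← hlast]; exact (List.getLast_cons (by simp)).symm
    obtain ⟨f₂, h2pre, h2dvg, h2zip, h2inv⟩ :=
      ih c w f₁ hf₁pre hrest₁ hlast' (List.nodup_cons.1 hnodup).2
    have hinv' : ∀ u v, f₂ u v ≠ 0 → f₂ u v = f u v := by
      intro u v hne
      have h := h2inv u v hne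
      by_cases h1 : u = c ∧ v = s
      · obtain ⟨rfl, rfl⟩ := h1
        rw [h] at hne ⊢
        exact absurd hzcs hne
      by_cases h2 : u = s ∧ v = c
      · obtain ⟨rfl, rfl⟩ := h2
        rw [h] at hne ⊢
        exact absurd hzsc hne
      · rw [h, heq u v h1 h2]
    refine ⟨f₂, h2pre, ?_, ?_, hinv'⟩
    · intro u
      rw [h2dvg u, push_dvg f c s hsc.symm u]
      have hws : w ≠ s := by
        intro h
        subst h
        exact hs_notmem (hlast' ▸ List.getLast_mem (l := c :: l') (by simp))
      by_cases h1 : u = s <;> by_cases h2 : u = c <;> by_cases h3 : u = w <;>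
        simp_all <;> ring
    · intro x y hxy
      rcases List.mem_cons.1 hxy with h | h
      · obtain ⟨rfl, rfl⟩ : x = s ∧ y = c := Prod.mk.injEq .. ▸ h
        constructor
        · by_contra hne
          rw [h2inv x y hne] at hne
          exact hne hzsc
        · by_contra hne
          rw [h2inv y x hne] at hne
          exact hne hzcs
      · exact h2zip x y h

lemma chain_dedup_aux {r : V → V → Prop} :
    ∀ (n : ℕ) (l : List V), l.length ≤ n → ∀ a, List.Chain r a l →
      ∃ l', List.Chain r a l' ∧ (a :: l').getLast (by simp) = (a :: l).getLast (by simp) ∧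
        (a :: l').Nodup ∧ l' ⊆ l := by
  intro n
  induction n with
  | zero =>
    intro l hl a _
    rw [Nat.le_zero, List.length_eq_zero_iff] at hl
    subst hl
    exact ⟨[], List.Chain.nil, rfl, by simp, by simp⟩
  | succ n ih =>
    intro l hl a hc
    by_cases ha : a ∈ l
    · obtain ⟨l1, l2, rfl⟩ := List.append_of_mem ha
      have hsplit := (List.isChain_cons_split (c := a) (l₁ := l1) (l₂ := l2)).1 hc
      have hlen : l2.length ≤ n := by
        have := hl; simp [List.length_append] at this; omega
      obtain ⟨l', h1, h2, h3, h4⟩ := ih l2 hlen a hsplit.2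
      refine ⟨l', h1, ?_, h3, fun x hx => by simp [h4 hx]⟩
      rw [h2]
      have : ((a :: (l1 ++ a :: l2)).getLast (by simp)) = ((a :: l2).getLast (by simp)) := by
        have : (a :: (l1 ++ a :: l2)) = (a :: l1) ++ (a :: l2) := by simp
        rw [List.getLast_congr _ _ this]
        exact List.getLast_append_of_right_ne_nil _ _ (by simp)
      rw [this]
    · cases l with
      | nil => exact ⟨[], List.Chain.nil, rfl, by simp, by simp⟩
      | cons c lt =>
        rcases List.chain_cons.1 hc with ⟨hac, hct⟩
        obtain ⟨l'', h1, h2, h3, h4⟩ := ih lt (by simp at hl; omega) c hct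
        refine ⟨c :: l'', List.chain_cons.2 ⟨hac, h1⟩, ?_, ?_, ?_⟩
        · rw [List.getLast_cons (l := c :: l'') (by simp), List.getLast_cons (l := c :: lt) (by simp)]
          exact h2
        · refine List.nodup_cons.2 ⟨?_, h3⟩
          intro hmem
          exact ha (by
            rcases List.mem_cons.1 hmem with h | h
            · simp [h]
            · exact List.mem_cons.2 (Or.inr (h4 h)))
        · intro x hx
          rcases List.mem_cons.1 hx with h | h
          · simp [h]
          · exact List.mem_cons.2 (Or.inr (h4 h))

lemma walk_of_chain {r : V → V → Prop} (hr : ∀ u v, r u v → G.Adj u v) :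
    ∀ (l : List V) (a b : V), List.Chain r a l → (a :: l).getLast (by simp) = b →
      ∃ p : G.Walk a b, p.support = a :: l ∧
        ∀ e ∈ p.edges, ∃ x y, e = s(x, y) ∧ (x, y) ∈ (a :: l).zip l ∧ r x y := by
  intro l
  induction l with
  | nil =>
    intro a b _ hlast
    simp at hlast
    subst hlast
    exact ⟨SimpleGraph.Walk.nil, by simp, by simp⟩
  | cons c l' ih =>
    intro a b hchain hlast
    rcases List.chain_cons.1 hchain with ⟨hac, hrest⟩
    have hlast' : (c :: l').getLast (by simp) = b := by
      rw [← hlast]; exact (List.getLast_cons (by simp)).symm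
    obtain ⟨p', hp'supp, hp'edges⟩ := ih c b hrest hlast'
    refine ⟨SimpleGraph.Walk.cons (hr a c hac) p', by simp [hp'supp], ?_⟩
    intro e he
    rw [SimpleGraph.Walk.edges_cons, List.mem_cons] at he
    rcases he with h | h
    · exact ⟨a, c, h, by simp, hac⟩
    · obtain ⟨x, y, h1, h2, h3⟩ := hp'edges e h
      exact ⟨x, y, h1, by simp [List.mem_cons]; right; exact h2, h3⟩

lemma sum_dvg_eq (f : V → V → ℤ) (hskew : ∀ u v, f v u = - f u v) (S : Finset V) :
    ∑ u ∈ S, dvg f u = ∑ u ∈ S, ∑ v ∈ Sᶜ, f u v := by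
  have hsplit : ∀ u, dvg f u = (∑ v ∈ S, f u v) + ∑ v ∈ Sᶜ, f u v := by
    intro u
    rw [dvg, ← Finset.sum_add_sum_compl S]
  rw [Finset.sum_congr rfl (fun u _ => hsplit u), Finset.sum_add_distrib]
  have hzero : ∑ u ∈ S, ∑ v ∈ S, f u v = 0 := by
    have h1 : ∑ u ∈ S, ∑ v ∈ S, f u v = ∑ u ∈ S, ∑ v ∈ S, f v u := Finset.sum_comm
    have h2 : ∑ u ∈ S, ∑ v ∈ S, f v u = - ∑ u ∈ S, ∑ v ∈ S, f u v := by
      rw [← Finset.sum_neg_distrib]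
      exact Finset.sum_congr rfl fun u _ => by
        rw [← Finset.sum_neg_distrib]
        exact Finset.sum_congr rfl fun v _ => hskew u v
    omega
  rw [hzero, zero_add]

def IsFlow (G : SimpleGraph V) (T' W' : Finset V) (f : V → V → ℤ) : Prop :=
  Pre G f ∧ ∀ u, dvg f u = 0 ∨ (u ∈ T' ∧ dvg f u = 1) ∨ (u ∈ W' ∧ dvg f u = -1)

lemma decompose (T' W' : Finset V) (hTW : Disjoint T' W') :
    ∀ (m : ℕ) (f : V → V → ℤ), IsFlow G T' W' f →
      (T'.filter (fun u => dvg f u = 1)).card = m →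
      ∃ (a : Fin m → V) (b : Fin m → V) (p : ∀ i : Fin m, G.Walk (a i) (b i)),
        Function.Injective a ∧ Function.Injective b ∧
        (∀ i, a i ∈ T' ∧ dvg f (a i) = 1) ∧ (∀ i, b i ∈ W' ∧ dvg f (b i) = -1) ∧
        (∀ i, (p i).IsPath) ∧
        (∀ i, ∀ e ∈ (p i).edges, ∀ x y, e = s(x, y) → f x y = 1 ∨ f y x = 1) ∧
        (∀ i j, i ≠ j → ∀ e : Sym2 V, e ∈ (p i).edges → e ∉ (p j).edges) := by
  classical
  intro m
  induction m with
  | zero =>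
    intro f _ _
    exact ⟨Fin.elim0, Fin.elim0, fun i => i.elim0, fun i => i.elim0, fun i => i.elim0,
      fun i => i.elim0, fun i => i.elim0, fun i => i.elim0, fun i => i.elim0,
      fun i => i.elim0⟩
  | succ n ihm =>
    intro f hflow hcard
    obtain ⟨hpre, hdvg⟩ := hflow
    -- pick a saturated source s
    have hne : (T'.filter (fun u => dvg f u = 1)).Nonempty := by
      rw [← Finset.card_pos, hcard]; omega
    obtain ⟨s, hs⟩ := hne
    rw [Finset.mem_filter] at hs
    obtain ⟨hsT, hsdvg⟩ := hs
    -- find a reachable saturated sink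
    set PosA := fun u v : V => f u v = 1 with hPosA
    set R : Finset V := univ.filter (fun v => Relation.ReflTransGen PosA s v) with hR
    have hsR : s ∈ R := by
      simp only [hR, Finset.mem_filter, Finset.mem_univ, true_and]
      exact Relation.ReflTransGen.refl
    have hwex : ∃ w ∈ R, dvg f w = -1 := by
      by_contra hno
      push_neg at hno
      have hnonneg : ∀ u ∈ R, 0 ≤ dvg f u := by
        intro u hu
        rcases hdvg u with h | h | h
        · omega
        · omega
        · exact absurd h.2 (hno u hu)
      have h1 : (1 : ℤ) ≤ ∑ u ∈ R, dvg f u := by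
        calc (1:ℤ) = dvg f s := hsdvg.symm
        _ ≤ ∑ u ∈ R, dvg f u := Finset.single_le_sum hnonneg hsR
      have h2 : ∑ u ∈ R, dvg f u ≤ 0 := by
        rw [sum_dvg_eq f hpre.1 R]
        apply Finset.sum_nonpos
        intro u hu
        apply Finset.sum_nonpos
        intro v hv
        rw [Finset.mem_compl] at hv
        by_contra hpos
        push_neg at hpos
        have : f u v = 1 := le_antisymm (hpre.2.1 u v) hpos
        exact hv (by
          simp only [hR, Finset.mem_filter, Finset.mem_univ, true_and] at hu ⊢
          exact hu.tail this)
      omega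
    obtain ⟨w, hwR, hwdvg⟩ := hwex
    have hwW : w ∈ W' := by
      rcases hdvg w with h | h | h
      · omega
      · omega
      · exact h.1
    have hwT : w ∉ T' := fun h => (Finset.disjoint_left.1 hTW) h hwW
    have hsw : s ≠ w := fun h => by rw [h, hwdvg] at hsdvg; omega
    -- chain from s to w
    simp only [hR, Finset.mem_filter, Finset.mem_univ, true_and] at hwR
    obtain ⟨l0, hl0chain, hl0last⟩ := List.exists_isChain_cons_of_relationReflTransGen hwR
    obtain ⟨l, hlchain, hllast, hlnodup, _⟩ := chain_dedup_aux l0.length l0 le_rfl s hl0chain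
    rw [hl0last] at hllast
    -- the walk
    have hPos_adj : ∀ u v, PosA u v → G.Adj u v := by
      intro u v h
      rw [hPosA] at h
      by_contra hn
      rw [hpre.2.2 u v hn] at h
      exact absurd h (by norm_num)
    obtain ⟨P, hPsupp, hPedges⟩ := walk_of_chain hPos_adj l s w hlchain hllast
    have hPpath : P.IsPath := by rw [SimpleGraph.Walk.isPath_def, hPsupp]; exact hlnodup
    -- unpush
    obtain ⟨f₂, h2pre, h2dvg, h2zip, h2inv⟩ := unpush_core l s w f hpre hlchain hllast hlnodup
    have h2flow : IsFlow G T' W' f₂ := by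
      refine ⟨h2pre, fun u => ?_⟩
      by_cases hu1 : u = s
      · subst hu1
        left
        rw [h2dvg u, hsdvg]
        simp [hsw]
      by_cases hu2 : u = w
      · subst hu2
        left
        rw [h2dvg u, hwdvg]
        simp [hu1]
      · rw [h2dvg u]
        simp only [hu1, hu2, if_false]
        rcases hdvg u with h | h | h
        · left; omega
        · right; left; exact ⟨h.1, by omega⟩
        · right; right; exact ⟨h.1, by omega⟩
    have hdvg_eq : ∀ u, u ≠ s → u ≠ w → dvg f₂ u = dvg f u := by
      intro u h1 h2
      rw [h2dvg u]
      simp [h1, h2]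
    have h2card : (T'.filter (fun u => dvg f₂ u = 1)).card = n := by
      have : T'.filter (fun u => dvg f₂ u = 1) = (T'.filter (fun u => dvg f u = 1)).erase s := by
        ext u
        simp only [Finset.mem_filter, Finset.mem_erase]
        constructor
        · rintro ⟨huT, hu⟩
          have hus : u ≠ s := by
            intro h; subst h
            rw [h2dvg u, hsdvg] at hu
            simp [hsw] at hu
          have huw : u ≠ w := fun h => hwT (h ▸ huT)
          exact ⟨hus, huT, by rw [← hdvg_eq u hus huw]; exact hu⟩
        · rintro ⟨hus, huT, hu⟩
          have huw : u ≠ w := fun h => hwT (h ▸ huT)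
          exact ⟨huT, by rw [hdvg_eq u hus huw]; exact hu⟩
      rw [this, Finset.card_erase_of_mem (Finset.mem_filter.2 ⟨hsT, hsdvg⟩), hcard]
      omega
    obtain ⟨a', b', p', hainj, hbinj, haT, hbW, hpath, hsupp, hdisj⟩ := ihm f₂ h2flow h2card
    -- new path edge facts
    have hPedge_arc : ∀ e ∈ P.edges, ∀ x y, e = s(x, y) → f₂ x y = 0 ∧ f₂ y x = 0 ∧ (f x y = 1 ∨ f y x = 1) := by
      intro e he x y hexy
      obtain ⟨x0, y0, he0, harc, hval⟩ := hPedges e he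
      rw [he0] at hexy
      rcases Sym2.eq_iff.1 hexy with ⟨h1, h2⟩ | ⟨h1, h2⟩
      · rw [h1, h2] at harc hval
        exact ⟨(h2zip x y harc).1, (h2zip x y harc).2, Or.inl hval⟩
      · rw [h1, h2] at harc hval
        exact ⟨(h2zip y x harc).2, (h2zip y x harc).1, Or.inr hval⟩
    have hdisj0 : ∀ j, ∀ e ∈ P.edges, e ∉ (p' j).edges := by
      intro j e he hej
      obtain ⟨⟨x, y⟩, rfl⟩ := e.exists_rep
      obtain ⟨hz1, hz2, -⟩ := hPedge_arc _ he x y rfl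
      rcases hsupp j _ hej x y rfl with h | h
      · rw [hz1] at h; exact absurd h (by norm_num)
      · rw [hz2] at h; exact absurd h (by norm_num)
    -- assemble
    refine ⟨Fin.cons s a', Fin.cons w b',
      Fin.cons P p', ?_, ?_, ?_, ?_, ?_, ?_, ?_⟩
    · rw [Fin.cons_injective_iff]
      refine ⟨?_, hainj⟩
      rintro ⟨j, hj⟩
      have := (haT j).2
      rw [hj] at this
      rw [h2dvg s, hsdvg] at this
      simp [hsw] at this
    · rw [Fin.cons_injective_iff]
      refine ⟨?_, hbinj⟩
      rintro ⟨j, hj⟩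
      have := (hbW j).2
      rw [hj] at this
      rw [h2dvg w, hwdvg] at this
      simp [hsw.symm] at this
    · intro i
      induction i using Fin.cases with
      | zero => exact ⟨by simpa using hsT, by simpa using hsdvg⟩
      | succ j =>
        simp only [Fin.cons_succ]
        refine ⟨(haT j).1, ?_⟩
        have hjs : a' j ≠ s := by
          intro h
          have := (haT j).2
          rw [h, h2dvg s, hsdvg] at this
          simp [hsw] at this
        have hjw : a' j ≠ w := fun h => hwT (h ▸ (haT j).1)
        rw [← hdvg_eq _ hjs hjw]
        exact (haT j).2
    · intro i
      induction i using Fin.cases with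
      | zero => exact ⟨by simpa using hwW, by simpa using hwdvg⟩
      | succ j =>
        simp only [Fin.cons_succ]
        refine ⟨(hbW j).1, ?_⟩
        have hjs : b' j ≠ s := fun h => (Finset.disjoint_left.1 hTW) hsT (h ▸ (hbW j).1)
        have hjw : b' j ≠ w := by
          intro h
          have := (hbW j).2
          rw [h, h2dvg w, hwdvg] at this
          simp [hsw.symm] at this
        rw [← hdvg_eq _ hjs hjw]
        exact (hbW j).2
    · intro i
      induction i using Fin.cases with
      | zero => exact hPpath
      | succ j => exact hpath j
    · intro i
      induction i using Fin.cases with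
      | zero =>
        intro e he x y hexy
        exact (hPedge_arc e he x y hexy).2.2
      | succ j =>
        intro e he x y hexy
        rcases hsupp j e he x y hexy with h | h
        · rcases (em (f₂ x y = 0)) with h0 | h0
          · rw [h0] at h; exact absurd h (by norm_num)
          · left; rw [← h2inv x y h0]; exact h
        · rcases (em (f₂ y x = 0)) with h0 | h0
          · rw [h0] at h; exact absurd h (by norm_num)
          · right; rw [← h2inv y x h0]; exact h
    · intro i j hij
      induction i using Fin.cases with
      | zero =>
        induction j using Fin.cases with
        | zero => exact absurd rfl hij
        | succ j' => exact fun e he => hdisj0 j' e he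
      | succ i' =>
        induction j using Fin.cases with
        | zero => exact fun e he hej => hdisj0 i' e hej he
        | succ j' =>
          exact hdisj i' j' (fun h => hij (by rw [h])) 

section WithDec
variable [DecidableRel G.Adj]


lemma crossEdges_eq_sum (S : Finset V) :
    (crossEdges G S : ℤ) = ∑ u ∈ S, ∑ v ∈ Sᶜ, (if G.Adj u v then (1 : ℤ) else 0) := by
  unfold crossEdges
  rw [Finset.card_filter]
  push_cast
  rw [Fintype.sum_prod_type]
  rw [← Finset.sum_add_sum_compl S (f := fun u => ∑ v : V, _)]
  have h2 : ∀ u ∈ Sᶜ, (∑ v : V, (if u ∈ S ∧ v ∉ S ∧ G.Adj u v then (1:ℤ) else 0)) = 0 := by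
    intro u hu
    rw [Finset.mem_compl] at hu
    exact Finset.sum_eq_zero fun v _ => by simp [hu]
  rw [Finset.sum_congr rfl h2, Finset.sum_const, smul_zero, add_zero]
  refine Finset.sum_congr rfl fun u hu => ?_
  rw [← Finset.sum_add_sum_compl S (f := fun v => if u ∈ S ∧ v ∉ S ∧ G.Adj u v then (1:ℤ) else 0)]
  have h3 : ∀ v ∈ S, (if u ∈ S ∧ v ∉ S ∧ G.Adj u v then (1:ℤ) else 0) = 0 := by
    intro v hv; simp [hv]
  rw [Finset.sum_congr rfl h3, Finset.sum_const, smul_zero, zero_add]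
  refine Finset.sum_congr rfl fun v hv => ?_
  rw [Finset.mem_compl] at hv
  simp [hu, hv]

lemma card_le_volume (hdeg : ∀ v : V, 0 < G.degree v) (S : Finset V) :
    (S.card : ℤ) ≤ (volume G S : ℤ) := by
  unfold volume
  push_cast
  calc (S.card : ℤ) = ∑ _v ∈ S, (1 : ℤ) := by simp
  _ ≤ ∑ v ∈ S, (G.degree v : ℤ) := Finset.sum_le_sum fun v _ => by
      have := hdeg v; omega

lemma degree_pos_of_connected (hconn : G.Connected) (hV : Nontrivial V) (v : V) :
    0 < G.degree v := by
  obtain ⟨u, hu⟩ := exists_ne v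
  obtain ⟨w⟩ := hconn.preconnected v u
  cases w with
  | nil => exact absurd rfl hu.symm
  | cons h _ => exact G.degree_pos_iff_exists_adj v |>.2 ⟨_, h⟩

end WithDec

end StmtAux

/-- Let `G` be a connected graph with conductance at least `1/2` and
maximum degree at most `6`, let `T` be a set of `k` vertices and `V' ⊆ V` with
`|V'| ≥ 0.1·|V|` and `k ≤ 0.1·|V|`. Then there exist at least `k/3` edge-disjoint paths in
`G`, each connecting a distinct vertex of `T` to a distinct vertex of `V'`. -/
theorem stmt_13 {V : Type*} [Fintype V] [DecidableEq V]
    (G : SimpleGraph V) [DecidableRel G.Adj]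
    (hconn : G.Connected) (hdeg : ∀ v : V, G.degree v ≤ 6)
    (hcond : ∀ S : Finset V, S.Nonempty → S ≠ Finset.univ →
      (1 / 2 : ℝ) * min (volume G S : ℝ) (volume G Sᶜ : ℝ) ≤ (crossEdges G S : ℝ))
    (T V' : Finset V) (k : ℕ) (hk : T.card = k)
    (hV' : (0.1 : ℝ) * (Fintype.card V : ℝ) ≤ (V'.card : ℝ))
    (hkle : (k : ℝ) ≤ 0.1 * (Fintype.card V : ℝ)) :
    ∃ (mm : ℕ), (k : ℝ) ≤ 3 * mm ∧
      ∃ (a : Fin mm → V) (b : Fin mm → V) (p : ∀ i : Fin mm, G.Walk (a i) (b i)),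
        Function.Injective a ∧ Function.Injective b ∧
        (∀ i, a i ∈ T) ∧ (∀ i, b i ∈ V') ∧
        (∀ i, (p i).IsPath) ∧
        (∀ i j, i ≠ j → ∀ e : Sym2 V, e ∈ (p i).edges → e ∉ (p j).edges) := by
  classical
  open StmtAux in
  by_cases hk0 : k = 0
  · exact ⟨0, by simp [hk0], Fin.elim0, Fin.elim0, fun i => i.elim0, fun i => i.elim0,
      fun i => i.elim0, fun i => i.elim0, fun i => i.elim0, fun i => i.elim0, fun i => i.elim0⟩
  have hk1 : 1 ≤ k := Nat.one_le_iff_ne_zero.2 hk0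
  have hk1R : (1 : ℝ) ≤ k := by exact_mod_cast hk1
  have hn10 : (10 : ℝ) ≤ Fintype.card V := by linarith
  have hVnontriv : Nontrivial V := by
    have h1 : (1 : ℝ) < Fintype.card V := by linarith
    exact Fintype.one_lt_card_iff_nontrivial.1 (by exact_mod_cast h1)
  have hdpos : ∀ v, 0 < G.degree v := StmtAux.degree_pos_of_connected hconn hVnontriv
  set T0 : Finset V := T ∩ V' with hT0
  set T' : Finset V := T \ V' with hT'def
  set W' : Finset V := V' \ T with hW'def
  have hTW : Disjoint T' W' := by
    rw [Finset.disjoint_left]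
    intro x hx hx2
    rw [hT'def, Finset.mem_sdiff] at hx
    rw [hW'def, Finset.mem_sdiff] at hx2
    exact hx.2 hx2.1
  have hkT' : T'.card + T0.card = k := by
    rw [hT'def, hT0, Finset.card_sdiff_add_card_inter, hk]
  have hVk : k ≤ V'.card := by
    have : (k : ℝ) ≤ V'.card := le_trans hkle hV'
    exact_mod_cast this
  have hW'card : T'.card ≤ W'.card := by
    have h1 : W'.card + (V' ∩ T).card = V'.card := by
      rw [hW'def]; exact Finset.card_sdiff_add_card_inter _ _
    have h2 : (V' ∩ T).card = T0.card := by rw [hT0, Finset.inter_comm]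
    omega
  -- the set of achievable flow values
  set N : Set ℕ := {mv : ℕ | ∃ f : V → V → ℤ, StmtAux.IsFlow G T' W' f ∧
    (T'.filter (fun u => StmtAux.dvg f u = 1)).card = mv} with hN
  have hN0 : 0 ∈ N := by
    refine ⟨fun _ _ => 0, ⟨⟨by simp, by simp, by simp⟩, fun u => Or.inl (by simp [StmtAux.dvg])⟩, ?_⟩
    have : T'.filter (fun u => StmtAux.dvg (fun _ _ => (0:ℤ)) u = 1) = ∅ := by
      refine Finset.filter_false_of_mem fun u _ => ?_
      simp [StmtAux.dvg]
    rw [this]; simp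
  have hbdd : BddAbove N := by
    refine ⟨T'.card, fun x hx => ?_⟩
    obtain ⟨f, _, hc⟩ := hx
    rw [← hc]
    exact Finset.card_filter_le _ _
  set m : ℕ := sSup N with hm
  obtain ⟨f, hflow, hfcard⟩ : m ∈ N := Nat.sSup_mem ⟨0, hN0⟩ hbdd
  have hmax : ∀ m' ∈ N, m' ≤ m := fun _ h => le_csSup hbdd h
  have hT'dvg : ∀ u ∈ T', StmtAux.dvg f u = 0 ∨ StmtAux.dvg f u = 1 := by
    intro u hu
    rcases hflow.2 u with h | h | h
    · exact Or.inl h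
    · exact Or.inr h.2
    · exact absurd h.1 (Finset.disjoint_left.1 hTW hu)
  have hW'dvg : ∀ u ∈ W', StmtAux.dvg f u = 0 ∨ StmtAux.dvg f u = -1 := by
    intro u hu
    rcases hflow.2 u with h | h | h
    · exact Or.inl h
    · exact absurd hu (Finset.disjoint_left.1 hTW h.1)
    · exact Or.inr h.2
  have hrest : ∀ u, u ∉ T' → u ∉ W' → StmtAux.dvg f u = 0 := by
    intro u h1 h2
    rcases hflow.2 u with h | h | h
    · exact h
    · exact absurd h.1 h1
    · exact absurd h.1 h2
  -- key inequality
  have hkey : (T'.card : ℝ) ≤ 3 * m := by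
    rcases le_or_gt T'.card m with hcase | hcase
    · have : (T'.card : ℝ) ≤ m := by exact_mod_cast hcase
      linarith
    · -- conductance argument
      set Asat : Finset V := T'.filter (fun u => StmtAux.dvg f u = 1) with hAsat
      set A : Finset V := T'.filter (fun u => StmtAux.dvg f u = 0) with hA
      have hdisjA : Disjoint A Asat := by
        rw [Finset.disjoint_left]
        intro u h1 h2
        rw [hA, Finset.mem_filter] at h1
        rw [hAsat, Finset.mem_filter] at h2
        omega
      have hunionA : A ∪ Asat = T' := by
        ext u
        rw [Finset.mem_union, hA, hAsat, Finset.mem_filter, Finset.mem_filter]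
        constructor
        · rintro (h | h) <;> exact h.1
        · intro h
          rcases hT'dvg u h with h1 | h1
          · exact Or.inl ⟨h, h1⟩
          · exact Or.inr ⟨h, h1⟩
      have hAcard : A.card + m = T'.card := by
        rw [← hfcard, ← Finset.card_union_of_disjoint hdisjA, hunionA]
      set Res : V → V → Prop := fun u v => G.Adj u v ∧ f u v ≤ 0 with hRes
      set S : Finset V := univ.filter (fun v => ∃ s ∈ A, Relation.ReflTransGen Res s v) with hS
      have hAS : A ⊆ S := by
        intro s hs
        rw [hS, Finset.mem_filter]
        exact ⟨Finset.mem_univ _, s, hs, Relation.ReflTransGen.refl⟩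
      have hnoaug : ∀ w ∈ W', StmtAux.dvg f w = 0 → w ∉ S := by
        rintro w hw hdw hwS
        rw [hS, Finset.mem_filter] at hwS
        obtain ⟨-, s, hsA, hreach⟩ := hwS
        rw [hA, Finset.mem_filter] at hsA
        obtain ⟨hsT', hsdvg⟩ := hsA
        have hsw : s ≠ w := fun h => (Finset.disjoint_left.1 hTW) hsT' (h ▸ hw)
        obtain ⟨l0, hl0chain, hl0last⟩ := List.exists_isChain_cons_of_relationReflTransGen hreach
        obtain ⟨l, hlchain, hllast, hlnodup, -⟩ :=
          StmtAux.chain_dedup_aux l0.length l0 le_rfl s hl0chain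
        rw [hl0last] at hllast
        obtain ⟨f', hf'pre, hf'dvg⟩ :=
          StmtAux.augment_core l s w f hflow.1 hlchain hllast hlnodup
        have hf'flow : StmtAux.IsFlow G T' W' f' := by
          refine ⟨hf'pre, fun u => ?_⟩
          by_cases hu1 : u = s
          · subst hu1
            right; left
            refine ⟨hsT', ?_⟩
            rw [hf'dvg u, hsdvg]
            simp [hsw]
          by_cases hu2 : u = w
          · subst hu2
            right; right
            refine ⟨hw, ?_⟩
            rw [hf'dvg u, hdw]
            simp [hu1]
          · have : StmtAux.dvg f' u = StmtAux.dvg f u := by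
              rw [hf'dvg u]; simp [hu1, hu2]
            rw [this]
            exact hflow.2 u
        have hf'card : (T'.filter (fun u => StmtAux.dvg f' u = 1)).card = m + 1 := by
          have hins : T'.filter (fun u => StmtAux.dvg f' u = 1) = insert s Asat := by
            ext u
            simp only [Finset.mem_filter, Finset.mem_insert, hAsat]
            constructor
            · rintro ⟨huT, hu⟩
              by_cases hus : u = s
              · exact Or.inl hus
              · right
                have huw : u ≠ w := fun h => (Finset.disjoint_left.1 hTW) huT (h ▸ hw)
                rw [hf'dvg u] at hu
                simp [hus, huw] at hu
                exact ⟨huT, by omega⟩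
            · rintro (rfl | hu)
              · refine ⟨hsT', ?_⟩
                rw [hf'dvg u, hsdvg]
                simp [hsw]
              · refine ⟨hu.1, ?_⟩
                have hus : u ≠ s := fun h => by
                  rw [h] at hu; rw [hsdvg] at hu; exact absurd hu.2 (by omega)
                have huw : u ≠ w := fun h => (Finset.disjoint_left.1 hTW) hu.1 (h ▸ hw)
                rw [hf'dvg u]
                simp [hus, huw]
                omega
          rw [hins, Finset.card_insert_of_notMem, hfcard]
          rw [hAsat, Finset.mem_filter]
          rintro ⟨-, h⟩
          rw [hsdvg] at h
          exact absurd h (by norm_num)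
        have : m + 1 ∈ N := ⟨f', hf'flow, hf'card⟩
        have := hmax _ this
        omega
      have hdvg_le : ∀ u, StmtAux.dvg f u ≤ if u ∈ Asat then 1 else 0 := by
        intro u
        by_cases hu : u ∈ Asat
        · simp only [hu, if_true]
          rw [hAsat, Finset.mem_filter] at hu
          omega
        · simp only [hu, if_false]
          by_cases h1 : u ∈ T'
          · rcases hT'dvg u h1 with h | h
            · omega
            · exact absurd (by rw [hAsat, Finset.mem_filter]; exact ⟨h1, h⟩) hu
          by_cases h2 : u ∈ W'
          · rcases hW'dvg u h2 with h | h <;> omega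
          · rw [hrest u h1 h2]
      have hScut : (crossEdges G S : ℤ) ≤ (m : ℤ) := by
        rw [StmtAux.crossEdges_eq_sum]
        have heq : ∑ u ∈ S, ∑ v ∈ Sᶜ, (if G.Adj u v then (1:ℤ) else 0)
            = ∑ u ∈ S, StmtAux.dvg f u := by
          rw [StmtAux.sum_dvg_eq f hflow.1.1 S]
          refine Finset.sum_congr rfl fun u hu => Finset.sum_congr rfl fun v hv => ?_
          rw [Finset.mem_compl] at hv
          by_cases hadj : G.Adj u v
          · simp only [hadj, if_true]
            by_contra hne
            have hle : f u v ≤ 0 := by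
              have := hflow.1.2.1 u v
              omega
            refine hv ?_
            rw [hS, Finset.mem_filter] at hu ⊢
            obtain ⟨-, s, hsA, hreach⟩ := hu
            exact ⟨Finset.mem_univ _, s, hsA, hreach.tail ⟨hadj, hle⟩⟩
          · simp [hadj, hflow.1.2.2 u v hadj]
        rw [heq]
        calc ∑ u ∈ S, StmtAux.dvg f u ≤ ∑ u ∈ S, (if u ∈ Asat then (1:ℤ) else 0) :=
              Finset.sum_le_sum fun u _ => hdvg_le u
        _ = ∑ u ∈ S ∩ Asat, (1:ℤ) := Finset.sum_ite_mem _ _ _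
        _ = ((S ∩ Asat).card : ℤ) := by simp
        _ ≤ (Asat.card : ℤ) := by
              have := Finset.card_le_card (Finset.inter_subset_right : S ∩ Asat ⊆ Asat)
              exact_mod_cast this
        _ = (m : ℤ) := by rw [hAsat, hfcard]
      have hSne : S.Nonempty := by
        have hAne : A.Nonempty := by
          rw [← Finset.card_pos]
          omega
        obtain ⟨s, hs⟩ := hAne
        exact ⟨s, hAS hs⟩
      -- sum over W'
      have hsumT' : ∑ u ∈ T', StmtAux.dvg f u = (m : ℤ) := by
        have : ∀ u ∈ T', StmtAux.dvg f u = if u ∈ Asat then (1:ℤ) else 0 := by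
          intro u hu
          by_cases h : u ∈ Asat
          · simp only [h, if_true]
            rw [hAsat, Finset.mem_filter] at h
            exact h.2
          · simp only [h, if_false]
            rcases hT'dvg u hu with h1 | h1
            · exact h1
            · exact absurd (by rw [hAsat, Finset.mem_filter]; exact ⟨hu, h1⟩) h
        rw [Finset.sum_congr rfl this, Finset.sum_ite_mem]
        have : T' ∩ Asat = Asat := by
          rw [hAsat]
          exact Finset.inter_eq_right.2 (Finset.filter_subset _ _)
        rw [this]
        simp [hfcard]
      have htotal : ∑ u : V, StmtAux.dvg f u = 0 := by
        have := StmtAux.sum_dvg_eq f hflow.1.1 (univ : Finset V)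
        simp at this
        exact this
      have hsumW' : ∑ u ∈ W', StmtAux.dvg f u = -(m : ℤ) := by
        have hsplit : ∑ u : V, StmtAux.dvg f u
            = ∑ u ∈ T', StmtAux.dvg f u + ∑ u ∈ T'ᶜ, StmtAux.dvg f u :=
          (Finset.sum_add_sum_compl T' _).symm
        have hcompl : ∑ u ∈ T'ᶜ, StmtAux.dvg f u = ∑ u ∈ W', StmtAux.dvg f u := by
          refine (Finset.sum_subset ?_ ?_).symm
          · intro u hu
            rw [Finset.mem_compl]
            exact fun h => (Finset.disjoint_left.1 hTW) h hu
          · intro u hu1 hu2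
            exact hrest u (Finset.mem_compl.1 hu1) hu2
        rw [htotal, hsumT', hcompl] at hsplit
        omega
      set Bsat : Finset V := W'.filter (fun u => StmtAux.dvg f u = -1) with hBsat
      set Bun : Finset V := W'.filter (fun u => StmtAux.dvg f u = 0) with hBun
      have hBsplit : Bun.card + Bsat.card = W'.card := by
        have hdisjB : Disjoint Bun Bsat := by
          rw [Finset.disjoint_left]
          intro u h1 h2
          rw [hBun, Finset.mem_filter] at h1
          rw [hBsat, Finset.mem_filter] at h2
          omega
        have hunionB : Bun ∪ Bsat = W' := by
          ext u
          rw [Finset.mem_union, hBun, hBsat, Finset.mem_filter, Finset.mem_filter]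
          constructor
          · rintro (h | h) <;> exact h.1
          · intro h
            rcases hW'dvg u h with h1 | h1
            · exact Or.inl ⟨h, h1⟩
            · exact Or.inr ⟨h, h1⟩
        rw [← Finset.card_union_of_disjoint hdisjB, hunionB]
      have hBsatcard : (Bsat.card : ℤ) = m := by
        have : ∀ u ∈ W', StmtAux.dvg f u = if u ∈ Bsat then (-1:ℤ) else 0 := by
          intro u hu
          by_cases h : u ∈ Bsat
          · simp only [h, if_true]
            rw [hBsat, Finset.mem_filter] at h
            exact h.2
          · simp only [h, if_false]
            rcases hW'dvg u hu with h1 | h1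
            · exact h1
            · exact absurd (by rw [hBsat, Finset.mem_filter]; exact ⟨hu, h1⟩) h
        rw [Finset.sum_congr rfl this, Finset.sum_ite_mem] at hsumW'
        have hinter : W' ∩ Bsat = Bsat := by
          rw [hBsat]
          exact Finset.inter_eq_right.2 (Finset.filter_subset _ _)
        rw [hinter, Finset.sum_const] at hsumW'
        simp at hsumW'
        omega
      have hBunS : Bun ⊆ Sᶜ := by
        intro u hu
        rw [hBun, Finset.mem_filter] at hu
        rw [Finset.mem_compl]
        exact hnoaug u hu.1 hu.2
      have hSneq : S ≠ univ := by
        have hBunne : Bun.Nonempty := by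
          rw [← Finset.card_pos]
          have : (Bsat.card : ℤ) = m := hBsatcard
          have hb : Bsat.card = m := by exact_mod_cast this
          omega
        obtain ⟨w, hw⟩ := hBunne
        intro h
        have := hBunS hw
        rw [h] at this
        simp at this
      -- volumes
      have hvolS : (T'.card : ℤ) - m ≤ (volume G S : ℤ) := by
        calc (T'.card : ℤ) - m = (A.card : ℤ) := by
              have := hAcard; push_cast [← this]; ring
        _ ≤ (S.card : ℤ) := by exact_mod_cast Finset.card_le_card hAS
        _ ≤ (volume G S : ℤ) := StmtAux.card_le_volume hdpos S
      have hvolSc : (T'.card : ℤ) - m ≤ (volume G Sᶜ : ℤ) := by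
        have hb : Bsat.card = m := by exact_mod_cast hBsatcard
        calc (T'.card : ℤ) - m ≤ (Bun.card : ℤ) := by
              have h1 : T'.card ≤ W'.card := hW'card
              push_cast
              omega
        _ ≤ ((Sᶜ : Finset V).card : ℤ) := by exact_mod_cast Finset.card_le_card hBunS
        _ ≤ (volume G Sᶜ : ℤ) := StmtAux.card_le_volume hdpos _
      have hc := hcond S hSne hSneq
      have hminR : (T'.card : ℝ) - m ≤ min (volume G S : ℝ) (volume G Sᶜ : ℝ) := by
        refine le_min ?_ ?_
        · exact_mod_cast hvolS
        · exact_mod_cast hvolSc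
      have hcrossR : (crossEdges G S : ℝ) ≤ m := by exact_mod_cast hScut
      linarith
  -- decompose the maximum flow into paths
  obtain ⟨a', b', p', hainj, hbinj, haT, hbW, hpath, hsupp, hdisj⟩ :=
    StmtAux.decompose T' W' hTW m f hflow hfcard
  -- trivial paths for T0
  set e0 : Fin T0.card → V := fun i => (T0.equivFin.symm i : V) with he0
  have he0mem : ∀ i, e0 i ∈ T0 := fun i => (T0.equivFin.symm i).2
  have he0inj : Function.Injective e0 :=
    Subtype.coe_injective.comp T0.equivFin.symm.injective
  set F := finSumFinEquiv (m := m) (n := T0.card) with hF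
  refine ⟨m + T0.card, ?_, Sum.elim a' e0 ∘ F.symm, Sum.elim b' e0 ∘ F.symm,
    fun i => Sum.rec (motive := fun x => G.Walk (Sum.elim a' e0 x) (Sum.elim b' e0 x))
      (fun j => p' j) (fun _ => SimpleGraph.Walk.nil) (F.symm i), ?_, ?_, ?_, ?_, ?_, ?_⟩
  · rw [← hkT']
    push_cast
    linarith
  · refine Function.Injective.comp ?_ F.symm.injective
    rintro (x | x) (y | y) hxy <;> simp only [Sum.elim_inl, Sum.elim_inr] at hxy
    · rw [hainj hxy]
    · exfalso
      have h1 : a' x ∈ T' := (haT x).1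
      have h2 : e0 y ∈ T0 := he0mem y
      rw [hxy] at h1
      rw [hT'def, Finset.mem_sdiff] at h1
      rw [hT0, Finset.mem_inter] at h2
      exact h1.2 h2.2
    · exfalso
      have h1 : a' y ∈ T' := (haT y).1
      have h2 : e0 x ∈ T0 := he0mem x
      rw [← hxy] at h1
      rw [hT'def, Finset.mem_sdiff] at h1
      rw [hT0, Finset.mem_inter] at h2
      exact h1.2 h2.2
    · rw [he0inj hxy]
  · refine Function.Injective.comp ?_ F.symm.injective
    rintro (x | x) (y | y) hxy <;> simp only [Sum.elim_inl, Sum.elim_inr] at hxy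
    · rw [hbinj hxy]
    · exfalso
      have h1 : b' x ∈ W' := (hbW x).1
      have h2 : e0 y ∈ T0 := he0mem y
      rw [hxy] at h1
      rw [hW'def, Finset.mem_sdiff] at h1
      rw [hT0, Finset.mem_inter] at h2
      exact h1.2 h2.1
    · exfalso
      have h1 : b' y ∈ W' := (hbW y).1
      have h2 : e0 x ∈ T0 := he0mem x
      rw [← hxy] at h1
      rw [hW'def, Finset.mem_sdiff] at h1
      rw [hT0, Finset.mem_inter] at h2
      exact h1.2 h2.1
    · rw [he0inj hxy]
  · intro i
    rcases hx : F.symm i with x | x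
    · simp only [Function.comp_apply, hx, Sum.elim_inl]
      have := (haT x).1
      rw [hT'def, Finset.mem_sdiff] at this
      exact this.1
    · simp only [Function.comp_apply, hx, Sum.elim_inr]
      have := he0mem x
      rw [hT0, Finset.mem_inter] at this
      exact this.1
  · intro i
    rcases hx : F.symm i with x | x
    · simp only [Function.comp_apply, hx, Sum.elim_inl]
      have := (hbW x).1
      rw [hW'def, Finset.mem_sdiff] at this
      exact this.1
    · simp only [Function.comp_apply, hx, Sum.elim_inr]
      have := he0mem x
      rw [hT0, Finset.mem_inter] at this
      exact this.2
  · intro i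
    have hgen : ∀ x : Fin m ⊕ Fin T0.card,
        (Sum.rec (motive := fun x => G.Walk (Sum.elim a' e0 x) (Sum.elim b' e0 x))
          (fun j => p' j) (fun _ => SimpleGraph.Walk.nil) x).IsPath := by
      rintro (x | x)
      · exact hpath x
      · exact SimpleGraph.Walk.IsPath.nil
    exact hgen (F.symm i)
  · intro i j hij
    have hgen : ∀ x y : Fin m ⊕ Fin T0.card, x ≠ y → ∀ e : Sym2 V,
        e ∈ (Sum.rec (motive := fun x => G.Walk (Sum.elim a' e0 x) (Sum.elim b' e0 x))
          (fun j => p' j) (fun _ => SimpleGraph.Walk.nil) x).edges →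
        e ∉ (Sum.rec (motive := fun x => G.Walk (Sum.elim a' e0 x) (Sum.elim b' e0 x))
          (fun j => p' j) (fun _ => SimpleGraph.Walk.nil) y).edges := by
      rintro (x | x) (y | y) hxy e he
      · exact hdisj x y (fun h => hxy (by rw [h])) e he
      · simp
      · simp at he
      · simp at he
    exact hgen _ _ (fun h => hij (F.symm.injective h))
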